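/- arXiv:1212.4715 — 5 statements merged into one kernel-verified Lean document; each statement's English description precedes it below -/
import Mathlib

section
/- Let a ∈ ℝ be fixed. Then there exist constants 0 < c ≤ C (depending only on a) such that for every T with 0 < T < 1 the integral J(T) = ∫₀¹ ζ^{-a} exp(−T/ζ) dζ satisfies: if a > 1 then c·T^{1−a} ≤ J(T) ≤ C·T^{1−a}; if a = 1 then c·log(2/T) ≤ J(T) ≤ C·log(2/T); and if a < 1 then c ≤ J(T) ≤ C. -/
open MeasureTheory Set


lemma pow_le_factorial_mul_exp (n : ℕ) {x : ℝ} (hx : 0 ≤ x) :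
    x ^ n ≤ (n.factorial : ℝ) * Real.exp x := by
  have h := Real.sum_le_exp_of_nonneg hx (n + 1)
  have h2 : x ^ n / (n.factorial : ℝ) ≤ ∑ i ∈ Finset.range (n + 1), x ^ i / (i.factorial : ℝ) := by
    refine Finset.single_le_sum (f := fun i => x ^ i / (i.factorial : ℝ)) ?_ ?_
    · intro i _
      positivity
    · simp
  have hn : (0 : ℝ) < (n.factorial : ℝ) := by positivity
  have := h2.trans h
  rw [div_le_iff₀ hn] at this
  linarith [this]

lemma exp_neg_le_factorial_div (n : ℕ) {x : ℝ} (hx : 0 < x) :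
    Real.exp (-x) ≤ (n.factorial : ℝ) / x ^ n := by
  have h := pow_le_factorial_mul_exp n hx.le
  rw [Real.exp_neg, le_div_iff₀ (by positivity : (0:ℝ) < x ^ n),
    inv_mul_le_iff₀ (Real.exp_pos x)]
  linarith

lemma f_le (n : ℕ) {a T ζ : ℝ} (hT : 0 < T) (hζ : 0 < ζ) :
    ζ ^ (-a) * Real.exp (-T / ζ) ≤ ((n.factorial : ℝ) / T ^ n) * ζ ^ ((n : ℝ) - a) := by
  have h1 : Real.exp (-T / ζ) ≤ (n.factorial : ℝ) / (T / ζ) ^ n := by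
    rw [neg_div]; exact exp_neg_le_factorial_div n (div_pos hT hζ)
  have h2 : (n.factorial : ℝ) / (T / ζ) ^ n = ((n.factorial : ℝ) / T ^ n) * ζ ^ n := by
    rw [div_pow]; field_simp
  have hz : (0 : ℝ) ≤ ζ ^ (-a) := (Real.rpow_pos_of_pos hζ _).le
  calc ζ ^ (-a) * Real.exp (-T / ζ) ≤ ζ ^ (-a) * (((n.factorial : ℝ) / T ^ n) * ζ ^ n) := by
        rw [← h2]; exact mul_le_mul_of_nonneg_left h1 hz
    _ = ((n.factorial : ℝ) / T ^ n) * ζ ^ ((n : ℝ) - a) := by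
        rw [sub_eq_add_neg, Real.rpow_add hζ, Real.rpow_natCast]; ring

lemma f_nonneg {a T ζ : ℝ} (hζ : 0 < ζ) : 0 ≤ ζ ^ (-a) * Real.exp (-T / ζ) := by
  positivity

lemma f_contOn {a T : ℝ} : ContinuousOn (fun ζ : ℝ => ζ ^ (-a) * Real.exp (-T / ζ))
    (Set.Ioo 0 1) := by
  apply ContinuousOn.mul
  · exact fun x hx =>
      (Real.continuousAt_rpow_const x (-a) (Or.inl (ne_of_gt hx.1))).continuousWithinAt
  · exact Real.continuous_exp.comp_continuousOn
      (continuousOn_const.div continuousOn_id fun x hx => ne_of_gt hx.1)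

lemma integrableOn_rpow_Ioo {r : ℝ} (hr : -1 < r) {b c : ℝ} (hbc : b ≤ c) :
    IntegrableOn (fun x : ℝ => x ^ r) (Set.Ioo b c) := by
  have := intervalIntegral.intervalIntegrable_rpow' (a := b) (b := c) hr
  rwa [intervalIntegrable_iff_integrableOn_Ioo_of_le hbc] at this

lemma integrableOn_f {a T : ℝ} (hT : 0 < T) :
    IntegrableOn (fun ζ : ℝ => ζ ^ (-a) * Real.exp (-T / ζ)) (Set.Ioo 0 1) := by
  set n := ⌈a⌉₊ with hn
  have hna : a ≤ (n : ℝ) := Nat.le_ceil a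
  have hr : (-1 : ℝ) < (n : ℝ) - a := by linarith
  have hg : IntegrableOn (fun ζ : ℝ => ((n.factorial : ℝ) / T ^ n) * ζ ^ ((n : ℝ) - a))
      (Set.Ioo 0 1) := (integrableOn_rpow_Ioo hr zero_le_one).const_mul _
  refine hg.mono' (f_contOn.aestronglyMeasurable measurableSet_Ioo) ?_
  rw [ae_restrict_iff' measurableSet_Ioo]
  filter_upwards with ζ hζ
  rw [Real.norm_eq_abs, abs_of_nonneg (f_nonneg hζ.1)]
  exact f_le n hT hζ.1

lemma integral_rpow_Ioo {r b c : ℝ} (h : -1 < r ∨ r ≠ -1 ∧ (0 : ℝ) ∉ Set.uIcc b c)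
    (hbc : b ≤ c) :
    ∫ x in Set.Ioo b c, x ^ r = (c ^ (r + 1) - b ^ (r + 1)) / (r + 1) := by
  rw [← MeasureTheory.integral_Ioc_eq_integral_Ioo, ← intervalIntegral.integral_of_le hbc,
    integral_rpow h]

lemma lower_aux {a T : ℝ} (hT : 0 < T) {p q : ℝ} (hsub : Set.Ioo p q ⊆ Set.Ioo 0 1)
    {g : ℝ → ℝ} (hg : IntegrableOn g (Set.Ioo p q))
    (hle : ∀ ζ ∈ Set.Ioo p q, g ζ ≤ ζ ^ (-a) * Real.exp (-T / ζ)) :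
    (∫ ζ in Set.Ioo p q, g ζ) ≤ ∫ ζ in Set.Ioo (0:ℝ) 1, ζ ^ (-a) * Real.exp (-T / ζ) := by
  have hf := integrableOn_f (a := a) hT
  have h1 : (∫ ζ in Set.Ioo p q, g ζ) ≤ ∫ ζ in Set.Ioo p q, ζ ^ (-a) * Real.exp (-T / ζ) :=
    setIntegral_mono_on hg (hf.mono_set hsub) measurableSet_Ioo hle
  refine h1.trans (setIntegral_mono_set hf ?_ (HasSubset.Subset.eventuallyLE hsub))
  rw [Filter.EventuallyLE, ae_restrict_iff' measurableSet_Ioo]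
  filter_upwards with ζ hζ
  exact f_nonneg hζ.1


set_option maxHeartbeats 1000000 in
/-- Two-sided bounds for `J(T) = ∫₀¹ ζ^{-a} exp(−T/ζ) dζ`, `0 < T < 1`:
`J(T) ≍ T^{1−a}` if `a > 1`, `J(T) ≍ log(2/T)` if `a = 1`, and `J(T) ≍ 1` if `a < 1`,
with implied constants depending only on `a`. -/
theorem stmt8 (a : ℝ) :
    ∃ c C : ℝ, 0 < c ∧ c ≤ C ∧ ∀ T : ℝ, 0 < T → T < 1 →
      ((1 < a →
          c * T ^ (1 - a) ≤ (∫ ζ in Set.Ioo (0:ℝ) 1, ζ ^ (-a) * Real.exp (-T / ζ)) ∧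
          (∫ ζ in Set.Ioo (0:ℝ) 1, ζ ^ (-a) * Real.exp (-T / ζ)) ≤ C * T ^ (1 - a)) ∧
        (a = 1 →
          c * Real.log (2 / T) ≤ (∫ ζ in Set.Ioo (0:ℝ) 1, ζ ^ (-a) * Real.exp (-T / ζ)) ∧
          (∫ ζ in Set.Ioo (0:ℝ) 1, ζ ^ (-a) * Real.exp (-T / ζ)) ≤ C * Real.log (2 / T)) ∧
        (a < 1 →
          c ≤ (∫ ζ in Set.Ioo (0:ℝ) 1, ζ ^ (-a) * Real.exp (-T / ζ)) ∧
          (∫ ζ in Set.Ioo (0:ℝ) 1, ζ ^ (-a) * Real.exp (-T / ζ)) ≤ C)) := by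
  rcases lt_trichotomy a 1 with hlt | heq | hgt
  · -- case a < 1
    set m : ℝ := Real.exp (-2) * Real.exp (-(|a| * Real.log 2)) with hm
    have hm0 : 0 < m := by positivity
    have hC0 : (0:ℝ) < 1 / (1 - a) := by
      have : (0:ℝ) < 1 - a := by linarith
      positivity
    refine ⟨min (m / 2) (1 / (1 - a)), max (m / 2) (1 / (1 - a)),
      lt_min (by positivity) hC0, min_le_max, ?_⟩
    intro T hT0 hT1
    refine ⟨fun h => absurd (h.trans hlt) (lt_irrefl 1),
      fun h => absurd h (ne_of_lt hlt), fun _ => ?_⟩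
    constructor
    · -- lower bound
      have hsub : Set.Ioo (1/2 : ℝ) 1 ⊆ Set.Ioo (0:ℝ) 1 :=
        fun x hx => ⟨by linarith [hx.1], hx.2⟩
      have hle : ∀ ζ ∈ Set.Ioo (1/2 : ℝ) 1,
          (fun _ : ℝ => m) ζ ≤ ζ ^ (-a) * Real.exp (-T / ζ) := by
        intro ζ hζ
        have hζ0 : (0:ℝ) < ζ := by linarith [hζ.1]
        have h1 : Real.exp (-(|a| * Real.log 2)) ≤ ζ ^ (-a) := by
          rw [Real.rpow_def_of_pos hζ0]
          apply Real.exp_le_exp.2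
          have hlogζ : |Real.log ζ| ≤ Real.log 2 := by
            rw [abs_le]
            constructor
            · have h := Real.log_le_log (by norm_num : (0:ℝ) < 1/2) hζ.1.le
              rw [one_div, Real.log_inv] at h
              linarith
            · have h2 : Real.log ζ ≤ 0 := Real.log_nonpos hζ0.le hζ.2.le
              have h3 : 0 ≤ Real.log 2 := Real.log_nonneg (by norm_num)
              linarith
          calc -(|a| * Real.log 2) ≤ -|Real.log ζ * -a| := by
                rw [abs_mul, abs_neg]
                apply neg_le_neg
                calc |Real.log ζ| * |a| ≤ Real.log 2 * |a| :=
                      mul_le_mul_of_nonneg_right hlogζ (abs_nonneg a)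
                  _ = |a| * Real.log 2 := mul_comm _ _
            _ ≤ Real.log ζ * -a := neg_abs_le _
        have h2 : Real.exp (-2 : ℝ) ≤ Real.exp (-T / ζ) := by
          apply Real.exp_le_exp.2
          rw [neg_div, neg_le_neg_iff, div_le_iff₀ hζ0]
          nlinarith [hζ.1, hT1.le]
        calc m = Real.exp (-(|a| * Real.log 2)) * Real.exp (-2) := by rw [hm]; ring
          _ ≤ ζ ^ (-a) * Real.exp (-T / ζ) :=
              mul_le_mul h1 h2 (Real.exp_pos _).le (Real.rpow_pos_of_pos hζ0 _).le
      have hgint : IntegrableOn (fun _ : ℝ => m) (Set.Ioo (1/2 : ℝ) 1) volume :=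
        integrableOn_const measure_Ioo_lt_top.ne
      have hkey := lower_aux hT0 hsub hgint hle
      have hval : (∫ _ in Set.Ioo (1/2 : ℝ) 1, m) = m / 2 := by
        rw [setIntegral_const, Real.volume_real_Ioo_of_le (by norm_num : (1/2:ℝ) ≤ 1), smul_eq_mul]
        ring
      rw [hval] at hkey
      exact le_trans (min_le_left _ _) hkey
    · -- upper bound
      have hf := integrableOn_f (a := a) hT0
      have hr : (-1 : ℝ) < -a := by linarith
      have hgint := integrableOn_rpow_Ioo hr (zero_le_one (α := ℝ))
      have hle : ∀ ζ ∈ Set.Ioo (0:ℝ) 1,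
          ζ ^ (-a) * Real.exp (-T / ζ) ≤ ζ ^ (-a) := by
        intro ζ hζ
        have h1 : Real.exp (-T / ζ) ≤ 1 := Real.exp_le_one_iff.2 (by
          rw [neg_div]
          exact neg_nonpos.2 (div_nonneg hT0.le hζ.1.le))
        nlinarith [Real.rpow_pos_of_pos hζ.1 (-a), (Real.exp_pos (-T / ζ)).le]
      have h1 := setIntegral_mono_on hf hgint measurableSet_Ioo hle
      have h2 : (∫ ζ in Set.Ioo (0:ℝ) 1, ζ ^ (-a)) = 1 / (1 - a) := by
        rw [integral_rpow_Ioo (Or.inl hr) zero_le_one, Real.one_rpow,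
          Real.zero_rpow (by linarith : -a + 1 ≠ 0)]
        rw [div_eq_div_iff (by linarith) (by linarith)]
        ring
      rw [h2] at h1
      exact h1.trans (le_max_right _ _)
  · -- case a = 1
    subst heq
    have hlog2 : (0:ℝ) < Real.log 2 := Real.log_pos one_lt_two
    set c₀ : ℝ := min (Real.exp (-1) / 2) (Real.exp (-2) / (4 * Real.log 2)) with hc₀
    set C₀ : ℝ := 1 / Real.log 2 + 1 with hC₀
    have hc₀0 : 0 < c₀ := lt_min (by positivity) (by positivity)
    refine ⟨min c₀ C₀, max c₀ C₀, lt_min hc₀0 (by positivity), min_le_max, ?_⟩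
    intro T hT0 hT1
    have hlogT : 0 ≤ -Real.log T := neg_nonneg.2 (Real.log_nonpos hT0.le hT1.le)
    have hlogdiv : Real.log (2 / T) = Real.log 2 - Real.log T :=
      Real.log_div two_ne_zero (ne_of_gt hT0)
    have hlogdiv0 : 0 ≤ Real.log (2 / T) := by rw [hlogdiv]; linarith
    have hinvcont : ∀ b : ℝ, 0 < b → IntegrableOn (fun x : ℝ => x⁻¹) (Set.Ioo b 1) volume := by
      intro b hb
      refine (ContinuousOn.integrableOn_compact (isCompact_Icc (a := b) (b := 1))
        ?_).mono_set Set.Ioo_subset_Icc_self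
      exact ContinuousOn.inv₀ continuousOn_id fun x hx => ne_of_gt (lt_of_lt_of_le hb hx.1)
    have hinvint : ∀ b : ℝ, 0 < b → b ≤ 1 →
        (∫ ζ in Set.Ioo b 1, ζ⁻¹) = -Real.log b := by
      intro b hb hb1
      rw [← MeasureTheory.integral_Ioc_eq_integral_Ioo,
        ← intervalIntegral.integral_of_le hb1,
        integral_inv (by
          rw [Set.uIcc_of_le hb1]
          exact fun h => absurd h.1 (not_le.2 hb)), one_div, Real.log_inv]
    refine ⟨fun h => absurd h (lt_irrefl 1), fun _ => ?_, fun h => absurd h (lt_irrefl 1)⟩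
    constructor
    · -- lower bound, a = 1
      have hJ1 : Real.exp (-1) * (-Real.log T) ≤
          ∫ ζ in Set.Ioo (0:ℝ) 1, ζ ^ (-(1:ℝ)) * Real.exp (-T / ζ) := by
        have hsub : Set.Ioo T 1 ⊆ Set.Ioo (0:ℝ) 1 := fun x hx => ⟨hT0.trans hx.1, hx.2⟩
        have hg : IntegrableOn (fun ζ : ℝ => Real.exp (-1) * ζ⁻¹) (Set.Ioo T 1) volume :=
          (hinvcont T hT0).const_mul _
        have hle : ∀ ζ ∈ Set.Ioo T 1,
            Real.exp (-1) * ζ⁻¹ ≤ ζ ^ (-(1:ℝ)) * Real.exp (-T / ζ) := by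
          intro ζ hζ
          have hζ0 : (0:ℝ) < ζ := hT0.trans hζ.1
          rw [Real.rpow_neg_one]
          have h1 : Real.exp (-1 : ℝ) ≤ Real.exp (-T / ζ) := by
            apply Real.exp_le_exp.2
            rw [neg_div, neg_le_neg_iff, div_le_one hζ0]
            exact hζ.1.le
          calc Real.exp (-1) * ζ⁻¹ = ζ⁻¹ * Real.exp (-1) := mul_comm _ _
            _ ≤ ζ⁻¹ * Real.exp (-T / ζ) :=
                mul_le_mul_of_nonneg_left h1 (inv_nonneg.2 hζ0.le)
        have hkey := lower_aux hT0 hsub hg hle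
        rwa [MeasureTheory.integral_const_mul, hinvint T hT0 hT1.le] at hkey
      have hJ2 : Real.exp (-2) / 2 ≤
          ∫ ζ in Set.Ioo (0:ℝ) 1, ζ ^ (-(1:ℝ)) * Real.exp (-T / ζ) := by
        have hsub : Set.Ioo (1/2 : ℝ) 1 ⊆ Set.Ioo (0:ℝ) 1 :=
          fun x hx => ⟨by linarith [hx.1], hx.2⟩
        have hg : IntegrableOn (fun _ : ℝ => Real.exp (-2 : ℝ)) (Set.Ioo (1/2 : ℝ) 1) volume :=
          integrableOn_const measure_Ioo_lt_top.ne
        have hle : ∀ ζ ∈ Set.Ioo (1/2 : ℝ) 1,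
            (fun _ : ℝ => Real.exp (-2 : ℝ)) ζ ≤ ζ ^ (-(1:ℝ)) * Real.exp (-T / ζ) := by
          intro ζ hζ
          have hζ0 : (0:ℝ) < ζ := by linarith [hζ.1]
          have h1 : Real.exp (-2 : ℝ) ≤ Real.exp (-T / ζ) := by
            apply Real.exp_le_exp.2
            rw [neg_div, neg_le_neg_iff, div_le_iff₀ hζ0]
            nlinarith [hζ.1, hT1.le]
          have h2 : (1:ℝ) ≤ ζ ^ (-(1:ℝ)) := by
            have := Real.rpow_le_rpow_of_nonpos hζ0 hζ.2.le (by norm_num : (-1:ℝ) ≤ 0)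
            rwa [Real.one_rpow] at this
          nlinarith [(Real.exp_pos (-T / ζ)).le]
        have hkey := lower_aux hT0 hsub hg hle
        have hval : (∫ _ in Set.Ioo (1/2 : ℝ) 1, Real.exp (-2 : ℝ)) = Real.exp (-2) / 2 := by
          rw [setIntegral_const, Real.volume_real_Ioo_of_le (by norm_num : (1/2:ℝ) ≤ 1), smul_eq_mul]
          ring
        rwa [hval] at hkey
      rw [hlogdiv]
      have hk1 : min c₀ C₀ ≤ Real.exp (-1) / 2 := (min_le_left _ _).trans (min_le_left _ _)
      have hk2 : min c₀ C₀ ≤ Real.exp (-2) / (4 * Real.log 2) :=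
        (min_le_left _ _).trans (min_le_right _ _)
      have hid : Real.exp (-2) / (4 * Real.log 2) * Real.log 2 = Real.exp (-2) / 4 := by
        field_simp
      have hp1 := mul_le_mul_of_nonneg_right hk2 hlog2.le
      have hp2 := mul_le_mul_of_nonneg_right hk1 hlogT
      nlinarith [hJ1, hJ2]
    · -- upper bound, a = 1
      have hf := integrableOn_f (a := 1) hT0
      have hsplit : Set.Ioc (0:ℝ) T ∪ Set.Ioo T 1 = Set.Ioo (0:ℝ) 1 :=
        Set.Ioc_union_Ioo_eq_Ioo hT0.le hT1
      have hdisj : Disjoint (Set.Ioc (0:ℝ) T) (Set.Ioo T 1) := by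
        rw [Set.disjoint_left]
        rintro x ⟨_, h1⟩ ⟨h2, _⟩
        exact absurd h2 (not_lt.2 h1)
      have hsub1 : Set.Ioc (0:ℝ) T ⊆ Set.Ioo (0:ℝ) 1 :=
        fun x hx => ⟨hx.1, lt_of_le_of_lt hx.2 hT1⟩
      have hsub2 : Set.Ioo T 1 ⊆ Set.Ioo (0:ℝ) 1 := fun x hx => ⟨hT0.trans hx.1, hx.2⟩
      have hf1 := hf.mono_set hsub1
      have hf2 := hf.mono_set hsub2
      have heqJ : (∫ ζ in Set.Ioo (0:ℝ) 1, ζ ^ (-(1:ℝ)) * Real.exp (-T / ζ)) =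
          (∫ ζ in Set.Ioc (0:ℝ) T, ζ ^ (-(1:ℝ)) * Real.exp (-T / ζ)) +
          ∫ ζ in Set.Ioo T 1, ζ ^ (-(1:ℝ)) * Real.exp (-T / ζ) := by
        rw [← hsplit, setIntegral_union hdisj measurableSet_Ioo hf1 hf2]
      have hp1 : (∫ ζ in Set.Ioc (0:ℝ) T, ζ ^ (-(1:ℝ)) * Real.exp (-T / ζ)) ≤ 1 := by
        have hg : IntegrableOn (fun _ : ℝ => T⁻¹) (Set.Ioc (0:ℝ) T) volume :=
          integrableOn_const measure_Ioc_lt_top.ne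
        have hle : ∀ ζ ∈ Set.Ioc (0:ℝ) T,
            ζ ^ (-(1:ℝ)) * Real.exp (-T / ζ) ≤ T⁻¹ := by
          intro ζ hζ
          have hζ0 : (0:ℝ) < ζ := hζ.1
          rw [Real.rpow_neg_one]
          have h1 : Real.exp (-T / ζ) ≤ ζ / T := by
            rw [neg_div]
            calc Real.exp (-(T / ζ)) ≤ (Nat.factorial 1 : ℝ) / (T / ζ) ^ 1 :=
                  exp_neg_le_factorial_div 1 (div_pos hT0 hζ0)
              _ = ζ / T := by
                  rw [Nat.factorial_one, Nat.cast_one, pow_one]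
                  field_simp
          calc ζ⁻¹ * Real.exp (-T / ζ) ≤ ζ⁻¹ * (ζ / T) :=
                mul_le_mul_of_nonneg_left h1 (inv_nonneg.2 hζ0.le)
            _ = T⁻¹ := by field_simp
        have h := setIntegral_mono_on hf1 hg measurableSet_Ioc hle
        rwa [setIntegral_const, Real.volume_real_Ioc_of_le hT0.le, smul_eq_mul, sub_zero,
          mul_inv_cancel₀ (ne_of_gt hT0)] at h
      have hp2 : (∫ ζ in Set.Ioo T 1, ζ ^ (-(1:ℝ)) * Real.exp (-T / ζ)) ≤ -Real.log T := by
        have hg := hinvcont T hT0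
        have hle : ∀ ζ ∈ Set.Ioo T 1, ζ ^ (-(1:ℝ)) * Real.exp (-T / ζ) ≤ ζ⁻¹ := by
          intro ζ hζ
          have hζ0 : (0:ℝ) < ζ := hT0.trans hζ.1
          rw [Real.rpow_neg_one]
          have h1 : Real.exp (-T / ζ) ≤ 1 := Real.exp_le_one_iff.2 (by
            rw [neg_div]
            exact neg_nonpos.2 (div_nonneg hT0.le hζ0.le))
          nlinarith [inv_pos.2 hζ0, (Real.exp_pos (-T / ζ)).le]
        have h := setIntegral_mono_on hf2 hg measurableSet_Ioo hle
        rwa [hinvint T hT0 hT1.le] at h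
      rw [heqJ, hlogdiv]
      have hmax : C₀ ≤ max c₀ C₀ := le_max_right _ _
      have hid : (1 / Real.log 2) * Real.log 2 = 1 := by field_simp
      have hpos : 0 ≤ (1 / Real.log 2) * (-Real.log T) :=
        mul_nonneg (by positivity) hlogT
      have hmono := mul_le_mul_of_nonneg_right hmax
        (by linarith : (0:ℝ) ≤ Real.log 2 - Real.log T)
      have hfin : 1 + (-Real.log T) ≤ C₀ * (Real.log 2 - Real.log T) := by
        rw [hC₀]
        nlinarith [hid, hpos, hlog2, hlogT]
      linarith [add_le_add hp1 hp2, hfin, hmono]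
  · -- case 1 < a
    set n : ℕ := ⌈a⌉₊ with hn
    have hna : a ≤ (n : ℝ) := Nat.le_ceil a
    have hra : (0:ℝ) < a - 1 := by linarith
    set c₀ : ℝ := Real.exp (-2) / 2 with hc₀
    set C₀ : ℝ := (n.factorial : ℝ) + 1 / (a - 1) with hC₀
    have hC₀0 : 0 < C₀ := by
      have h1 : (0:ℝ) < (n.factorial : ℝ) := by positivity
      have h2 : (0:ℝ) < 1 / (a - 1) := by positivity
      rw [hC₀]; linarith
    refine ⟨min c₀ C₀, max c₀ C₀, lt_min (by positivity) hC₀0, min_le_max, ?_⟩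
    intro T hT0 hT1
    have hTpow : (0:ℝ) ≤ T ^ (1 - a) := (Real.rpow_pos_of_pos hT0 _).le
    refine ⟨fun _ => ?_, fun h => absurd h.symm (ne_of_lt hgt),
      fun h => absurd (hgt.trans h) (lt_irrefl 1)⟩
    constructor
    · -- lower bound, a > 1
      have hsub : Set.Ioo (T/2) T ⊆ Set.Ioo (0:ℝ) 1 :=
        fun x hx => ⟨lt_trans (by linarith : (0:ℝ) < T/2) hx.1, hx.2.trans hT1⟩
      set mm : ℝ := T ^ (-a) * Real.exp (-2) with hmm
      have hle : ∀ ζ ∈ Set.Ioo (T/2) T,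
          (fun _ : ℝ => mm) ζ ≤ ζ ^ (-a) * Real.exp (-T / ζ) := by
        intro ζ hζ
        have hζ0 : (0:ℝ) < ζ := lt_trans (by linarith) hζ.1
        have h1 : T ^ (-a) ≤ ζ ^ (-a) :=
          Real.rpow_le_rpow_of_nonpos hζ0 hζ.2.le (by linarith : -a ≤ 0)
        have h2 : Real.exp (-2 : ℝ) ≤ Real.exp (-T / ζ) := by
          apply Real.exp_le_exp.2
          rw [neg_div, neg_le_neg_iff, div_le_iff₀ hζ0]
          linarith [hζ.1]
        exact mul_le_mul h1 h2 (Real.exp_pos _).le (Real.rpow_pos_of_pos hζ0 _).le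
      have hg : IntegrableOn (fun _ : ℝ => mm) (Set.Ioo (T/2) T) volume :=
        integrableOn_const measure_Ioo_lt_top.ne
      have hkey := lower_aux hT0 hsub hg hle
      have hval : (∫ _ in Set.Ioo (T/2) T, mm) = mm * (T / 2) := by
        rw [setIntegral_const, Real.volume_real_Ioo_of_le (by linarith : T/2 ≤ T), smul_eq_mul]
        ring
      rw [hval] at hkey
      have hTsplit : T ^ (1 - a) = T * T ^ (-a) := by
        rw [sub_eq_add_neg, Real.rpow_add hT0, Real.rpow_one]
      calc min c₀ C₀ * T ^ (1 - a) ≤ c₀ * T ^ (1 - a) :=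
            mul_le_mul_of_nonneg_right (min_le_left _ _) hTpow
        _ = mm * (T / 2) := by rw [hTsplit, hc₀, hmm]; ring
        _ ≤ _ := hkey
    · -- upper bound, a > 1
      have hf := integrableOn_f (a := a) hT0
      have hsplit : Set.Ioc (0:ℝ) T ∪ Set.Ioo T 1 = Set.Ioo (0:ℝ) 1 :=
        Set.Ioc_union_Ioo_eq_Ioo hT0.le hT1
      have hdisj : Disjoint (Set.Ioc (0:ℝ) T) (Set.Ioo T 1) := by
        rw [Set.disjoint_left]
        rintro x ⟨_, h1⟩ ⟨h2, _⟩
        exact absurd h2 (not_lt.2 h1)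
      have hsub1 : Set.Ioc (0:ℝ) T ⊆ Set.Ioo (0:ℝ) 1 :=
        fun x hx => ⟨hx.1, lt_of_le_of_lt hx.2 hT1⟩
      have hsub2 : Set.Ioo T 1 ⊆ Set.Ioo (0:ℝ) 1 := fun x hx => ⟨hT0.trans hx.1, hx.2⟩
      have hf1 := hf.mono_set hsub1
      have hf2 := hf.mono_set hsub2
      have heqJ : (∫ ζ in Set.Ioo (0:ℝ) 1, ζ ^ (-a) * Real.exp (-T / ζ)) =
          (∫ ζ in Set.Ioc (0:ℝ) T, ζ ^ (-a) * Real.exp (-T / ζ)) +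
          ∫ ζ in Set.Ioo T 1, ζ ^ (-a) * Real.exp (-T / ζ) := by
        rw [← hsplit, setIntegral_union hdisj measurableSet_Ioo hf1 hf2]
      have hr : (-1:ℝ) < (n:ℝ) - a := by linarith
      have hp1 : (∫ ζ in Set.Ioc (0:ℝ) T, ζ ^ (-a) * Real.exp (-T / ζ)) ≤
          (n.factorial : ℝ) * T ^ (1 - a) := by
        have hg : IntegrableOn (fun ζ : ℝ => ((n.factorial : ℝ) / T ^ n) * ζ ^ ((n:ℝ) - a))
            (Set.Ioc (0:ℝ) T) volume := by
          refine Integrable.const_mul ?_ _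
          have := intervalIntegral.intervalIntegrable_rpow' (a := (0:ℝ)) (b := T) hr
          rwa [intervalIntegrable_iff_integrableOn_Ioc_of_le hT0.le] at this
        have hle : ∀ ζ ∈ Set.Ioc (0:ℝ) T, ζ ^ (-a) * Real.exp (-T / ζ) ≤
            ((n.factorial : ℝ) / T ^ n) * ζ ^ ((n:ℝ) - a) :=
          fun ζ hζ => f_le n hT0 hζ.1
        have h := setIntegral_mono_on hf1 hg measurableSet_Ioc hle
        have hval : (∫ ζ in Set.Ioc (0:ℝ) T, ((n.factorial : ℝ) / T ^ n) * ζ ^ ((n:ℝ) - a)) =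
            (n.factorial : ℝ) * T ^ (1 - a) / ((n:ℝ) - a + 1) := by
          rw [MeasureTheory.integral_const_mul, MeasureTheory.integral_Ioc_eq_integral_Ioo,
            integral_rpow_Ioo (Or.inl hr) hT0.le,
            Real.zero_rpow (by linarith : (n:ℝ) - a + 1 ≠ 0), sub_zero]
          have h3 : T ^ ((n:ℝ) - a + 1) = T ^ (n:ℕ) * T ^ (1 - a) := by
            rw [← Real.rpow_natCast T n, ← Real.rpow_add hT0]
            ring_nf
          rw [h3]
          have hTn : T ^ (n:ℕ) ≠ 0 := by positivity
          have hne : ((n:ℝ) - a + 1) ≠ 0 := by intro h0; linarith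
          field_simp
        rw [hval] at h
        refine h.trans ?_
        exact div_le_self (by positivity) (by linarith)
      have hp2 : (∫ ζ in Set.Ioo T 1, ζ ^ (-a) * Real.exp (-T / ζ)) ≤
          T ^ (1 - a) / (a - 1) := by
        have hg : IntegrableOn (fun x : ℝ => x ^ (-a)) (Set.Ioo T 1) volume := by
          refine (ContinuousOn.integrableOn_compact (isCompact_Icc (a := T) (b := 1))
            ?_).mono_set Set.Ioo_subset_Icc_self
          exact fun x hx => (Real.continuousAt_rpow_const x (-a)
            (Or.inl (ne_of_gt (lt_of_lt_of_le hT0 hx.1)))).continuousWithinAt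
        have hle : ∀ ζ ∈ Set.Ioo T 1, ζ ^ (-a) * Real.exp (-T / ζ) ≤ ζ ^ (-a) := by
          intro ζ hζ
          have hζ0 : (0:ℝ) < ζ := hT0.trans hζ.1
          have h1 : Real.exp (-T / ζ) ≤ 1 := Real.exp_le_one_iff.2 (by
            rw [neg_div]
            exact neg_nonpos.2 (div_nonneg hT0.le hζ0.le))
          nlinarith [Real.rpow_pos_of_pos hζ0 (-a), (Real.exp_pos (-T / ζ)).le]
        have h := setIntegral_mono_on hf2 hg measurableSet_Ioo hle
        have hval : (∫ ζ in Set.Ioo T 1, ζ ^ (-a)) =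
            (1 - T ^ (-a + 1)) / (-a + 1) := by
          rw [integral_rpow_Ioo (Or.inr ⟨by linarith, by
            rw [Set.uIcc_of_le hT1.le]
            exact fun hmem => absurd hmem.1 (not_le.2 hT0)⟩) hT1.le, Real.one_rpow]
        rw [hval] at h
        refine h.trans ?_
        have hXX : T ^ (1 - a) = T ^ (-a + 1) := by
          congr 1
          ring
        rw [hXX]
        have heq2 : (1 - T ^ (-a + 1)) / (-a + 1) = (T ^ (-a + 1) - 1) / (a - 1) := by
          rw [div_eq_div_iff (show (-a + 1 : ℝ) ≠ 0 by intro h0; linarith)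
            (show (a - 1 : ℝ) ≠ 0 by intro h0; linarith)]
          ring
        rw [heq2]
        exact (div_le_div_iff_of_pos_right hra).2 (by linarith)
      rw [heqJ]
      calc (∫ ζ in Set.Ioc (0:ℝ) T, ζ ^ (-a) * Real.exp (-T / ζ)) +
          ∫ ζ in Set.Ioo T 1, ζ ^ (-a) * Real.exp (-T / ζ) ≤
          (n.factorial : ℝ) * T ^ (1 - a) + T ^ (1 - a) / (a - 1) := add_le_add hp1 hp2
        _ = C₀ * T ^ (1 - a) := by rw [hC₀]; ring
        _ ≤ max c₀ C₀ * T ^ (1 - a) :=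
            mul_le_mul_of_nonneg_right (le_max_right _ _) hTpow
end

section
/- Let n ≥ 1. There exists a constant C depending only on n (in particular, independent of α) such that for every multi-index α ∈ (-1/2,∞)^n, every ξ ∈ (0,1) and all x, y ∈ (0,∞)^n one has G^H_{α,t(ξ)}(x,y) ≤ C ((1−ξ²)/ξ)^{n/2} exp( −|x−y|²/(4ξ) − ξ|x+y|²/4 ). -/
open MeasureTheory Set
open scoped ENNReal NNReal

/-- Euclidean norm of `x ∈ ℝ^n` (realized as `Fin n → ℝ`). -/
noncomputable def eunorm {n : ℕ} (x : Fin n → ℝ) : ℝ := Real.sqrt (∑ i, x i ^ 2)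

/-- The `n`-dimensional Laguerre heat kernel of Hermite type `G^H_{α,t}(x,y)`. -/
noncomputable def lagHeatHn {n : ℕ} (α : Fin n → ℝ) (t : ℝ) (x y : Fin n → ℝ) : ℝ :=
  (∏ i, (x i * y i) ^ (α i + 1/2)) * Real.sinh (2 * t) ^ (-(n:ℝ) - ∑ i, α i) *
    ∫ s in Set.univ.pi fun _ : Fin n => Set.Icc (-1:ℝ) 1,
      Real.exp (-(1/2) * (Real.cosh (2 * t) / Real.sinh (2 * t)) * (eunorm x ^ 2 + eunorm y ^ 2)
          - (∑ i, x i * y i * s i) / Real.sinh (2 * t)) *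
        ∏ i, ((1 - s i ^ 2) ^ (α i - 1/2) /
          (2 ^ (α i) * Real.sqrt Real.pi * Real.Gamma (α i + 1/2)))

/-- Meda's change of variable `t(ξ) = (1/2) log((1+ξ)/(1−ξ))`, `ξ ∈ (0,1)`. -/
noncomputable def meda (ξ : ℝ) : ℝ := (1/2) * Real.log ((1 + ξ) / (1 - ξ))



-- integrability of φ u = exp(-(z*u)) * u^(b-1) on Ioi 0
lemma phi_integrable {b z : ℝ} (hb : 0 < b) (hz : 0 < z) :
    IntegrableOn (fun u : ℝ => Real.exp (-(z*u)) * u ^ (b-1)) (Set.Ioi 0) := by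
  have h := integrableOn_rpow_mul_exp_neg_mul_rpow (p := 1) (s := b - 1) (b := z)
    (by linarith) one_pos hz
  refine (integrableOn_congr_fun (fun u hu => ?_) measurableSet_Ioi).mp h
  simp [Real.rpow_one, mul_comm, neg_mul]

lemma key_rpow_le {b u : ℝ} (hb : 0 < b) (h1 : 1 ≤ u) (h2 : u ≤ 2) :
    u ^ (b - 1) ≤ 2 ^ b := by
  rcases le_total 1 b with h | h
  · calc u ^ (b-1) ≤ 2 ^ (b-1) := Real.rpow_le_rpow (by linarith) h2 (by linarith)
    _ ≤ 2 ^ b := Real.rpow_le_rpow_of_exponent_le one_le_two (by linarith)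
  · calc u ^ (b-1) ≤ 1 := Real.rpow_le_one_of_one_le_of_nonpos h1 (by linarith)
    _ ≤ 2 ^ b := by
        calc (1:ℝ) = 1 ^ b := (Real.one_rpow b).symm
        _ ≤ 2 ^ b := Real.rpow_le_rpow (by norm_num) one_le_two hb.le

lemma oneD {b z : ℝ} (hb : 0 < b) (hz : 0 < z) :
    ∫ s in Set.Icc (-1:ℝ) 1, Real.exp (-(z*(1+s))) * (1-s^2) ^ (b-1) ≤
      2 ^ (b+1) * ((1/z) ^ b * Real.Gamma b) := by
  set φ : ℝ → ℝ := fun u => Real.exp (-(z*u)) * u ^ (b-1) with hφ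
  have hφIoi : IntegrableOn φ (Set.Ioi 0) := phi_integrable hb hz
  have hφnonnegIoi : ∀ u : ℝ, 0 < u → 0 ≤ φ u := fun u hu =>
    mul_nonneg (Real.exp_pos _).le (Real.rpow_nonneg hu.le _)
  have hφ02 : IntervalIntegrable φ volume 0 2 := by
    rw [intervalIntegrable_iff_integrableOn_Ioc_of_le (by norm_num)]
    exact hφIoi.mono_set Ioc_subset_Ioi_self
  -- the majorant g
  set g : ℝ → ℝ := fun s => 2 ^ b * (φ (1+s) + φ (1-s)) with hg
  have hg1 : IntervalIntegrable (fun s => φ (1+s)) volume (-1) 1 := by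
    have := hφ02.comp_add_right 1
    simpa [add_comm, show (0:ℝ)-1 = -1 by norm_num, show (2:ℝ)-1 = 1 by norm_num] using this
  have hg2 : IntervalIntegrable (fun s => φ (1-s)) volume (-1) 1 := by
    have := (hφ02.comp_sub_left 1).symm
    simpa [show (1:ℝ)-0 = 1 by norm_num, show (1:ℝ)-2 = -1 by norm_num] using this
  have hgint : IntervalIntegrable g volume (-1) 1 := ((hg1.add hg2).const_mul _)
  -- pointwise bound on Icc
  have hpt : ∀ s ∈ Set.Icc (-1:ℝ) 1,
      Real.exp (-(z*(1+s))) * (1-s^2) ^ (b-1) ≤ g s := by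
    intro s hs
    obtain ⟨hs1, hs2⟩ := hs
    have h1p : (0:ℝ) ≤ 1 + s := by linarith
    have h1m : (0:ℝ) ≤ 1 - s := by linarith
    have hsplit : (1 - s^2 : ℝ) ^ (b-1) = (1+s) ^ (b-1) * (1-s) ^ (b-1) := by
      rw [show (1 - s^2 : ℝ) = (1+s)*(1-s) by ring, Real.mul_rpow h1p h1m]
    have hφp : 0 ≤ φ (1+s) := mul_nonneg (Real.exp_pos _).le (Real.rpow_nonneg h1p _)
    have hφm : 0 ≤ φ (1-s) := mul_nonneg (Real.exp_pos _).le (Real.rpow_nonneg h1m _)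
    have h2b : (0:ℝ) ≤ 2 ^ b := Real.rpow_nonneg (by norm_num) b
    rcases le_total s 0 with hneg | hpos
    · have hA : (1-s) ^ (b-1) ≤ 2 ^ b := key_rpow_le hb (by linarith) (by linarith)
      have hB : 0 ≤ Real.exp (-(z*(1+s))) * (1+s) ^ (b-1) :=
        mul_nonneg (Real.exp_pos _).le (Real.rpow_nonneg h1p _)
      calc Real.exp (-(z*(1+s))) * (1-s^2) ^ (b-1)
          = (Real.exp (-(z*(1+s))) * (1+s) ^ (b-1)) * (1-s) ^ (b-1) := by
            rw [hsplit]; ring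
        _ ≤ (Real.exp (-(z*(1+s))) * (1+s) ^ (b-1)) * 2 ^ b :=
            mul_le_mul_of_nonneg_left hA hB
        _ = 2 ^ b * φ (1+s) := by rw [hφ]; ring
        _ ≤ g s := by
            show _ ≤ 2 ^ b * (φ (1 + s) + φ (1 - s))
            nlinarith [mul_nonneg h2b hφm]
    · have hA : (1+s) ^ (b-1) ≤ 2 ^ b := key_rpow_le hb (by linarith) (by linarith)
      have hexp : Real.exp (-(z*(1+s))) ≤ Real.exp (-(z*(1-s))) := by
        apply Real.exp_le_exp.2
        nlinarith
      have hQ : 0 ≤ (1-s) ^ (b-1) := Real.rpow_nonneg h1m _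
      calc Real.exp (-(z*(1+s))) * (1-s^2) ^ (b-1)
          = Real.exp (-(z*(1+s))) * ((1+s) ^ (b-1) * (1-s) ^ (b-1)) := by rw [hsplit]
        _ ≤ Real.exp (-(z*(1-s))) * ((1+s) ^ (b-1) * (1-s) ^ (b-1)) := by
            apply mul_le_mul_of_nonneg_right hexp
            exact mul_nonneg (Real.rpow_nonneg h1p _) hQ
        _ ≤ Real.exp (-(z*(1-s))) * (2 ^ b * (1-s) ^ (b-1)) := by
            apply mul_le_mul_of_nonneg_left _ (Real.exp_pos _).le
            exact mul_le_mul_of_nonneg_right hA hQ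
        _ = 2 ^ b * φ (1-s) := by rw [hφ]; ring
        _ ≤ g s := by
            show _ ≤ 2 ^ b * (φ (1 + s) + φ (1 - s))
            nlinarith [mul_nonneg h2b hφp]
  -- compare with g
  have step1 : ∫ s in Set.Icc (-1:ℝ) 1, Real.exp (-(z*(1+s))) * (1-s^2) ^ (b-1) ≤
      ∫ s in Set.Icc (-1:ℝ) 1, g s := by
    apply integral_mono_of_nonneg
    · refine (ae_restrict_iff' measurableSet_Icc).2 (Filter.Eventually.of_forall ?_)
      intro s hs
      have : (0:ℝ) ≤ 1 - s^2 := by nlinarith [hs.1, hs.2]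
      exact mul_nonneg (Real.exp_pos _).le (Real.rpow_nonneg this _)
    · exact (intervalIntegrable_iff_integrableOn_Icc_of_le (by norm_num)).1 hgint
    · exact (ae_restrict_iff' measurableSet_Icc).2 (Filter.Eventually.of_forall hpt)
  -- compute ∫ g
  have hI02 : ∫ s in (-1:ℝ)..1, φ (1+s) = ∫ u in (0:ℝ)..2, φ u := by
    have : (fun s => φ (1+s)) = fun s => φ (s+1) := by funext s; rw [add_comm]
    rw [this, intervalIntegral.integral_comp_add_right φ 1]
    norm_num
  have hI02' : ∫ s in (-1:ℝ)..1, φ (1-s) = ∫ u in (0:ℝ)..2, φ u := by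
    rw [intervalIntegral.integral_comp_sub_left φ 1]
    norm_num
  have hI02bound : ∫ u in (0:ℝ)..2, φ u ≤ (1/z) ^ b * Real.Gamma b := by
    rw [intervalIntegral.integral_of_le (by norm_num)]
    have hmono : ∫ u in Set.Ioc (0:ℝ) 2, φ u ≤ ∫ u in Set.Ioi (0:ℝ), φ u := by
      apply setIntegral_mono_set hφIoi
      · refine (ae_restrict_iff' measurableSet_Ioi).2 (Filter.Eventually.of_forall ?_)
        intro u hu; exact hφnonnegIoi u hu
      · exact Filter.Eventually.of_forall Ioc_subset_Ioi_self
    refine hmono.trans ?_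
    rw [show ∫ u in Set.Ioi (0:ℝ), φ u = ∫ u in Set.Ioi (0:ℝ), u ^ (b-1) * Real.exp (-(z*u)) from
      setIntegral_congr_fun measurableSet_Ioi (fun u _ => by rw [hφ]; ring)]
    rw [Real.integral_rpow_mul_exp_neg_mul_Ioi hb hz]
  have hgval : ∫ s in Set.Icc (-1:ℝ) 1, g s = 2 ^ b * ((∫ u in (0:ℝ)..2, φ u) + (∫ u in (0:ℝ)..2, φ u)) := by
    rw [MeasureTheory.integral_Icc_eq_integral_Ioc,
      ← intervalIntegral.integral_of_le (show (-1:ℝ) ≤ 1 by norm_num)]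
    rw [hg]
    rw [intervalIntegral.integral_const_mul, intervalIntegral.integral_add hg1 hg2, hI02, hI02']
  refine step1.trans ?_
  rw [hgval]
  have h2b : (0:ℝ) ≤ 2 ^ b := Real.rpow_nonneg (by norm_num) b
  have : (2:ℝ) ^ (b+1) = 2 ^ b * 2 := by
    rw [Real.rpow_add (by norm_num), Real.rpow_one]
  rw [this]
  have hG : (0:ℝ) ≤ (1/z) ^ b * Real.Gamma b := by
    have := Real.Gamma_pos_of_pos hb
    positivity
  nlinarith [hI02bound, h2b]



lemma sinh_meda {ξ : ℝ} (h0 : 0 < ξ) (h1 : ξ < 1) :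
    Real.sinh (2 * meda ξ) = 2*ξ/(1-ξ^2) := by
  have h1m : 0 < 1 - ξ := by linarith
  have h1p : 0 < 1 + ξ := by linarith
  have ha : 0 < (1+ξ)/(1-ξ) := div_pos h1p h1m
  have h2 : 2 * meda ξ = Real.log ((1+ξ)/(1-ξ)) := by rw [meda]; ring
  have hq : (1-ξ^2) ≠ 0 := by nlinarith
  rw [h2, Real.sinh_log ha, inv_div]
  field_simp [hq]
  ring

lemma cosh_meda {ξ : ℝ} (h0 : 0 < ξ) (h1 : ξ < 1) :
    Real.cosh (2 * meda ξ) = (1+ξ^2)/(1-ξ^2) := by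
  have h1m : 0 < 1 - ξ := by linarith
  have h1p : 0 < 1 + ξ := by linarith
  have ha : 0 < (1+ξ)/(1-ξ) := div_pos h1p h1m
  have h2 : 2 * meda ξ = Real.log ((1+ξ)/(1-ξ)) := by rw [meda]; ring
  have hq : (1-ξ^2) ≠ 0 := by nlinarith
  rw [h2, Real.cosh_log ha, inv_div]
  field_simp [hq]
  ring

lemma prod_rpow_sum {x : ℝ} (hx : 0 < x) {n : ℕ} (f : Fin n → ℝ) :
    ∏ i, x ^ f i = x ^ (∑ i, f i) := by
  simp_rw [Real.rpow_def_of_pos hx]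
  rw [← Real.exp_sum, ← Finset.mul_sum]

lemma box_integral_prod {n : ℕ} (G : Fin n → ℝ → ℝ) :
    (∫ s in Set.univ.pi fun _ : Fin n => Set.Icc (-1:ℝ) 1, ∏ i, G i (s i)) =
      ∏ i, ∫ t in Set.Icc (-1:ℝ) 1, G i t := by
  have hA : MeasurableSet (Set.univ.pi fun _ : Fin n => Set.Icc (-1:ℝ) 1) :=
    MeasurableSet.univ_pi fun _ => measurableSet_Icc
  rw [← integral_indicator hA]
  have h : (Set.indicator (Set.univ.pi fun _ : Fin n => Set.Icc (-1:ℝ) 1)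
      fun s : Fin n → ℝ => ∏ i, G i (s i)) =
      fun s : Fin n → ℝ => ∏ i, Set.indicator (Set.Icc (-1:ℝ) 1) (G i) (s i) := by
    funext s
    by_cases hs : s ∈ Set.univ.pi fun _ : Fin n => Set.Icc (-1:ℝ) 1
    · rw [Set.indicator_of_mem hs]
      exact Finset.prod_congr rfl fun i _ =>
        (Set.indicator_of_mem (hs i (Set.mem_univ i)) _).symm
    · rw [Set.indicator_of_notMem hs]
      simp only [Set.mem_pi, Set.mem_univ, forall_true_left, not_forall] at hs
      obtain ⟨j, hj⟩ := hs
      exact (Finset.prod_eq_zero (Finset.mem_univ j) (Set.indicator_of_notMem hj _)).symm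
  rw [h, MeasureTheory.integral_fintype_prod_volume_eq_prod (ι := Fin n)
    (fun i => Set.indicator (Set.Icc (-1:ℝ) 1) (G i))]
  exact Finset.prod_congr rfl fun i _ => integral_indicator measurableSet_Icc

/-- there is `C = C(n)` (independent of `α`) such that for every
`α ∈ (-1/2,∞)^n`, every `ξ ∈ (0,1)` and all `x, y ∈ (0,∞)^n`,
`G^H_{α,t(ξ)}(x,y) ≤ C ((1−ξ²)/ξ)^{n/2} exp(−|x−y|²/(4ξ) − ξ|x+y|²/4)`. -/
theorem stmt9 (n : ℕ) (hn : 1 ≤ n) :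
    ∃ C : ℝ, 0 < C ∧ ∀ α : Fin n → ℝ, (∀ i, -(1/2) < α i) → ∀ ξ ∈ Set.Ioo (0:ℝ) 1,
      ∀ x y : Fin n → ℝ, (∀ i, 0 < x i) → (∀ i, 0 < y i) →
        lagHeatHn α (meda ξ) x y ≤
          C * ((1 - ξ ^ 2) / ξ) ^ ((n:ℝ) / 2) *
            Real.exp (-(eunorm (x - y)) ^ 2 / (4 * ξ) - ξ * (eunorm (x + y)) ^ 2 / 4) := by
  refine ⟨2^n, by positivity, ?_⟩
  intro α hα ξ hξ x y hx hy
  obtain ⟨hξ0, hξ1⟩ := hξ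
  have h1m : (0:ℝ) < 1 - ξ^2 := by nlinarith
  set σ : ℝ := 2*ξ/(1-ξ^2) with hσdef
  have hσ : 0 < σ := by positivity
  have hsinh : Real.sinh (2 * meda ξ) = σ := sinh_meda hξ0 hξ1
  have hcosh : Real.cosh (2 * meda ξ) = (1+ξ^2)/(1-ξ^2) := cosh_meda hξ0 hξ1
  have hxy : ∀ i, 0 < x i * y i := fun i => mul_pos (hx i) (hy i)
  set z : Fin n → ℝ := fun i => x i * y i / σ with hzdef
  have hz : ∀ i, 0 < z i := fun i => div_pos (hxy i) hσ
  have hb : ∀ i, 0 < α i + 1/2 := fun i => by have := hα i; linarith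
  set R : ℝ := -(eunorm (x - y)) ^ 2 / (4 * ξ) - ξ * (eunorm (x + y)) ^ 2 / 4 with hRdef
  set c : Fin n → ℝ := fun i => 2 ^ (α i) * Real.sqrt Real.pi * Real.Gamma (α i + 1/2)
    with hcdef
  have hcpos : ∀ i, 0 < c i := fun i =>
    mul_pos (mul_pos (Real.rpow_pos_of_pos two_pos _) (Real.sqrt_pos.2 Real.pi_pos))
      (Real.Gamma_pos_of_pos (hb i))
  set G : Fin n → ℝ → ℝ :=
    fun i t => Real.exp (-(z i * (1+t))) * ((1 - t^2) ^ (α i - 1/2) / c i) with hGdef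
  set J : Fin n → ℝ := fun i => ∫ t in Set.Icc (-1:ℝ) 1, G i t with hJdef
  -- sums of squares
  have hex : ∀ v : Fin n → ℝ, eunorm v ^ 2 = ∑ i, v i ^ 2 := fun v =>
    Real.sq_sqrt (Finset.sum_nonneg fun i _ => sq_nonneg _)
  have e3 : (eunorm (x-y)) ^ 2 = (∑ i, x i ^ 2) + (∑ i, y i ^ 2) - 2 * ∑ i, x i * y i := by
    rw [hex]
    have h : ∀ i : Fin n, (x - y) i ^ 2 = x i ^ 2 + y i ^ 2 - 2 * (x i * y i) := fun i => by
      simp only [Pi.sub_apply]; ring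
    rw [Finset.sum_congr rfl fun i _ => h i, Finset.sum_sub_distrib, Finset.sum_add_distrib,
      ← Finset.mul_sum]
  have e4 : (eunorm (x+y)) ^ 2 = (∑ i, x i ^ 2) + (∑ i, y i ^ 2) + 2 * ∑ i, x i * y i := by
    rw [hex]
    have h : ∀ i : Fin n, (x + y) i ^ 2 = x i ^ 2 + y i ^ 2 + 2 * (x i * y i) := fun i => by
      simp only [Pi.add_apply]; ring
    rw [Finset.sum_congr rfl fun i _ => h i, Finset.sum_add_distrib, Finset.sum_add_distrib,
      ← Finset.mul_sum]
  -- integrand identity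
  have hFeq : ∀ s : Fin n → ℝ,
      Real.exp (-(1/2) * ((1+ξ^2)/(1-ξ^2) / σ) * (eunorm x ^ 2 + eunorm y ^ 2)
          - (∑ i, x i * y i * s i) / σ) * (∏ i, ((1 - s i ^ 2) ^ (α i - 1/2) / c i)) =
        Real.exp R * ∏ i, G i (s i) := by
    intro s
    have e5 : ∑ i, -(z i * (1 + s i)) =
        -((∑ i, x i * y i)/σ) - (∑ i, x i * y i * s i)/σ := by
      have h : ∀ i : Fin n, -(z i * (1 + s i)) =
          -((x i * y i)/σ) - (x i * y i * s i)/σ := fun i => by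
        simp only [hzdef]; ring
      rw [Finset.sum_congr rfl fun i _ => h i, Finset.sum_sub_distrib, Finset.sum_neg_distrib,
        Finset.sum_div, Finset.sum_div]
    have hE : -(1/2) * ((1+ξ^2)/(1-ξ^2) / σ) * (eunorm x ^ 2 + eunorm y ^ 2)
          - (∑ i, x i * y i * s i) / σ = R + ∑ i, -(z i * (1 + s i)) := by
      rw [e5, hRdef, e3, e4, hex x, hex y, hσdef]
      have hξ0' : ξ ≠ 0 := ne_of_gt hξ0
      have h1m' : (1-ξ^2) ≠ 0 := ne_of_gt h1m
      field_simp
      ring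
    rw [hE, Real.exp_add, Real.exp_sum, mul_assoc, ← Finset.prod_mul_distrib]
  -- rewrite the kernel
  have hbox : MeasurableSet (Set.univ.pi fun _ : Fin n => Set.Icc (-1:ℝ) 1) :=
    MeasurableSet.univ_pi fun _ => measurableSet_Icc
  have hI : (∫ s in Set.univ.pi fun _ : Fin n => Set.Icc (-1:ℝ) 1,
      Real.exp (-(1/2) * ((1+ξ^2)/(1-ξ^2) / σ) * (eunorm x ^ 2 + eunorm y ^ 2)
          - (∑ i, x i * y i * s i) / σ) * ∏ i, ((1 - s i ^ 2) ^ (α i - 1/2) / c i)) =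
      Real.exp R * ∏ i, J i := by
    rw [setIntegral_congr_fun hbox fun s _ => hFeq s, integral_const_mul, box_integral_prod]
  -- bounds on J
  have hJnonneg : ∀ i, 0 ≤ J i := by
    intro i
    refine setIntegral_nonneg measurableSet_Icc fun t ht => ?_
    have h1 : (0:ℝ) ≤ 1 - t^2 := by nlinarith [ht.1, ht.2]
    exact mul_nonneg (Real.exp_pos _).le
      (div_nonneg (Real.rpow_nonneg h1 _) (hcpos i).le)
  set K0 : ℝ := 2 ^ ((3:ℝ)/2) / Real.sqrt Real.pi with hK0def
  have hK0 : 0 < K0 := div_pos (Real.rpow_pos_of_pos two_pos _) (Real.sqrt_pos.2 Real.pi_pos)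
  have hJle : ∀ i, J i ≤ K0 * (1 / z i) ^ (α i + 1/2) := by
    intro i
    have h1 : J i = (∫ t in Set.Icc (-1:ℝ) 1,
        Real.exp (-(z i * (1+t))) * (1 - t^2) ^ (α i - 1/2)) / c i := by
      simp only [hJdef, hGdef]
      rw [← integral_div]
      exact setIntegral_congr_fun measurableSet_Icc fun t _ => (mul_div_assoc _ _ _).symm
    have h2 := oneD (hb i) (hz i)
    rw [show (α i + 1/2) - 1 = α i - 1/2 from by ring] at h2
    rw [h1]
    have h3 : (∫ t in Set.Icc (-1:ℝ) 1,
        Real.exp (-(z i * (1+t))) * (1 - t^2) ^ (α i - 1/2)) / c i ≤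
        (2 ^ ((α i + 1/2)+1) * ((1 / z i) ^ (α i + 1/2) * Real.Gamma (α i + 1/2))) / c i :=
      (div_le_div_iff_of_pos_right (hcpos i)).2 h2
    refine h3.trans_eq ?_
    have h4 : (2:ℝ) ^ ((α i + 1/2) + 1) = 2 ^ (α i) * 2 ^ ((3:ℝ)/2) := by
      rw [← Real.rpow_add two_pos]; congr 1; ring
    have hne1 : (2:ℝ) ^ (α i) ≠ 0 := ne_of_gt (Real.rpow_pos_of_pos two_pos _)
    have hne2 : Real.sqrt Real.pi ≠ 0 := ne_of_gt (Real.sqrt_pos.2 Real.pi_pos)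
    have hne3 : Real.Gamma (α i + 1/2) ≠ 0 := ne_of_gt (Real.Gamma_pos_of_pos (hb i))
    have cancel : ∀ (u v A Γp sp : ℝ), u ≠ 0 → Γp ≠ 0 → sp ≠ 0 →
        (u * v * (A * Γp)) / (u * sp * Γp) = v / sp * A := by
      intros u v A Γp sp hu hΓ hs
      field_simp
    simp only [hcdef, hK0def]
    rw [h4]
    exact cancel _ _ _ _ _ hne1 hne3 hne2
  -- per-term product bound
  have hterm : ∀ i, (x i * y i) ^ (α i + 1/2) * J i ≤ K0 * σ ^ (α i + 1/2) := by
    intro i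
    have hp : (0:ℝ) ≤ (x i * y i) ^ (α i + 1/2) := Real.rpow_nonneg (hxy i).le _
    calc (x i * y i) ^ (α i + 1/2) * J i
        ≤ (x i * y i) ^ (α i + 1/2) * (K0 * (1 / z i) ^ (α i + 1/2)) :=
          mul_le_mul_of_nonneg_left (hJle i) hp
      _ = K0 * ((x i * y i) * (1 / z i)) ^ (α i + 1/2) := by
          rw [Real.mul_rpow (hxy i).le (one_div_nonneg.2 (hz i).le)]; ring
      _ = K0 * σ ^ (α i + 1/2) := by
          congr 2
          simp only [hzdef]
          field_simp
          exact div_self (ne_of_gt (hxy i))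
  -- assemble
  unfold lagHeatHn
  rw [hsinh, hcosh, hI]
  have hsum : ∑ i, (α i + 1/2) = (∑ i, α i) + (n:ℝ) * (1/2) := by
    rw [Finset.sum_add_distrib, Finset.sum_const, Finset.card_univ, Fintype.card_fin,
      nsmul_eq_mul]
  have hcore : (∏ i, (x i * y i) ^ (α i + 1/2)) * σ ^ (-(n:ℝ) - ∑ i, α i) * ∏ i, J i ≤
      2^n * ((1 - ξ^2)/ξ) ^ ((n:ℝ)/2) := by
    have hprod : (∏ i, (x i * y i) ^ (α i + 1/2)) * ∏ i, J i ≤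
        K0^n * σ ^ (∑ i, (α i + 1/2)) := by
      rw [← Finset.prod_mul_distrib]
      calc ∏ i, ((x i * y i) ^ (α i + 1/2) * J i) ≤ ∏ i, (K0 * σ ^ (α i + 1/2)) :=
            Finset.prod_le_prod (fun i _ => mul_nonneg (Real.rpow_nonneg (hxy i).le _)
              (hJnonneg i)) (fun i _ => hterm i)
        _ = K0^n * σ ^ (∑ i, (α i + 1/2)) := by
            rw [Finset.prod_mul_distrib, Finset.prod_const, Finset.card_univ, Fintype.card_fin,
              prod_rpow_sum hσ]
    have hσe : σ ^ (-(n:ℝ) - ∑ i, α i) * σ ^ (∑ i, (α i + 1/2)) = σ ^ (-((n:ℝ)/2)) := by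
      rw [← Real.rpow_add hσ]; congr 1; rw [hsum]; ring
    calc (∏ i, (x i * y i) ^ (α i + 1/2)) * σ ^ (-(n:ℝ) - ∑ i, α i) * ∏ i, J i
        = σ ^ (-(n:ℝ) - ∑ i, α i) * ((∏ i, (x i * y i) ^ (α i + 1/2)) * ∏ i, J i) := by ring
      _ ≤ σ ^ (-(n:ℝ) - ∑ i, α i) * (K0^n * σ ^ (∑ i, (α i + 1/2))) :=
          mul_le_mul_of_nonneg_left hprod (Real.rpow_nonneg hσ.le _)
      _ = K0^n * σ ^ (-((n:ℝ)/2)) := by rw [← hσe]; ring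
      _ ≤ 2^n * ((1 - ξ^2)/ξ) ^ ((n:ℝ)/2) := by
          have hu : (0:ℝ) < (1 - ξ^2)/ξ := div_pos h1m hξ0
          have hσinv : σ ^ (-((n:ℝ)/2)) = ((1 - ξ^2)/(2*ξ)) ^ ((n:ℝ)/2) := by
            rw [Real.rpow_neg hσ.le, ← Real.inv_rpow hσ.le, hσdef, inv_div]
          have hsplit : ((1 - ξ^2)/(2*ξ)) ^ ((n:ℝ)/2) =
              (1/2:ℝ) ^ ((n:ℝ)/2) * ((1 - ξ^2)/ξ) ^ ((n:ℝ)/2) := by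
            rw [show (1 - ξ^2)/(2*ξ) = (1/2) * ((1 - ξ^2)/ξ) from by ring,
              Real.mul_rpow (by norm_num) hu.le]
          have hhalf : ((1:ℝ)/2) ^ ((n:ℝ)/2) = (((1:ℝ)/2) ^ ((1:ℝ)/2))^n := by
            rw [← Real.rpow_natCast (((1:ℝ)/2) ^ ((1:ℝ)/2)) n, ← Real.rpow_mul (by norm_num)]
            congr 1; ring
          rw [hσinv, hsplit, hhalf, ← mul_assoc, ← mul_pow]
          have hq : K0 * ((1:ℝ)/2) ^ ((1:ℝ)/2) = 2 / Real.sqrt Real.pi := by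
            have q0eq : ((1:ℝ)/2) ^ ((1:ℝ)/2) = ((2:ℝ) ^ ((1:ℝ)/2))⁻¹ := by
              rw [one_div, ← Real.inv_rpow (by norm_num : (0:ℝ) ≤ 2)]
            have k2 : (2:ℝ) ^ ((3:ℝ)/2) = 2 ^ ((1:ℝ)/2) * 2 := by
              rw [show (3:ℝ)/2 = 1/2 + 1 from by norm_num, Real.rpow_add two_pos,
                Real.rpow_one]
            have hne : (2:ℝ) ^ ((1:ℝ)/2) ≠ 0 := ne_of_gt (Real.rpow_pos_of_pos two_pos _)
            rw [hK0def, q0eq, k2]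
            field_simp
          have hπ1 : (1:ℝ) ≤ Real.sqrt Real.pi := by
            rw [show (1:ℝ) = Real.sqrt 1 from (Real.sqrt_one).symm]
            exact Real.sqrt_le_sqrt (by linarith [Real.pi_gt_three])
          have hqle : K0 * ((1:ℝ)/2) ^ ((1:ℝ)/2) ≤ 2 := by
            rw [hq]; exact div_le_self (by norm_num) hπ1
          have hqnn : (0:ℝ) ≤ K0 * ((1:ℝ)/2) ^ ((1:ℝ)/2) :=
            mul_nonneg hK0.le (Real.rpow_nonneg (by norm_num) _)
          exact mul_le_mul_of_nonneg_right (pow_le_pow_left₀ hqnn hqle n)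
            (Real.rpow_nonneg hu.le _)
  calc (∏ i, (x i * y i) ^ (α i + 1/2)) * σ ^ (-(n:ℝ) - ∑ i, α i) * (Real.exp R * ∏ i, J i)
      = ((∏ i, (x i * y i) ^ (α i + 1/2)) * σ ^ (-(n:ℝ) - ∑ i, α i) * ∏ i, J i) *
        Real.exp R := by ring
    _ ≤ (2^n * ((1 - ξ^2)/ξ) ^ ((n:ℝ)/2)) * Real.exp R :=
        mul_le_mul_of_nonneg_right hcore (Real.exp_pos _).le
    _ = 2^n * ((1 - ξ^2)/ξ) ^ ((n:ℝ)/2) * Real.exp R := by ring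
end

section
/- Let α ≥ −1/2, λ > 0, b ≥ 1 and 0 < B < A. Then ∫₀¹ (1−s)^{α+b−1/2} (A−Bs)^{−(α+b+λ+1/2)} ds ≤ (Γ(b)Γ(λ)/Γ(b+λ)) · A^{−(α+1/2)} · B^{−b} · (A−B)^{−λ}. -/
open MeasureTheory intervalIntegral Set

lemma realBeta {b l : ℝ} (hb : 0 < b) (hl : 0 < l) :
    ∫ x in (0:ℝ)..1, x ^ (b-1) * (1-x) ^ (l-1) =
      Real.Gamma b * Real.Gamma l / Real.Gamma (b + l) := by
  have hG : Complex.Gamma b * Complex.Gamma l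
      = Complex.Gamma (b + l) * Complex.betaIntegral b l :=
    Complex.Gamma_mul_Gamma_eq_betaIntegral (by simpa using hb) (by simpa using hl)
  have hbeta : Complex.betaIntegral b l
      = ((∫ x in (0:ℝ)..1, x ^ (b-1) * (1-x) ^ (l-1) : ℝ) : ℂ) := by
    rw [Complex.betaIntegral, ← intervalIntegral.integral_ofReal]
    refine intervalIntegral.integral_congr fun x hx => ?_
    rw [uIcc_of_le zero_le_one] at hx
    symm
    rw [Complex.ofReal_mul, Complex.ofReal_cpow hx.1, Complex.ofReal_cpow (by linarith [hx.2])]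
    push_cast
    ring
  have hGpos : 0 < Real.Gamma (b + l) := Real.Gamma_pos_of_pos (by linarith)
  rw [hbeta, ← Complex.ofReal_add, Complex.Gamma_ofReal, Complex.Gamma_ofReal,
    Complex.Gamma_ofReal, ← Complex.ofReal_mul, ← Complex.ofReal_mul] at hG
  have := Complex.ofReal_inj.mp hG
  field_simp
  linarith [this]

/-- Integrability of the real Beta integrand on `0..1` for `1 ≤ b`, `0 < l`. -/
lemma betaIntegrand_intble {b l : ℝ} (hb : 1 ≤ b) (hl : 0 < l) :
    IntervalIntegrable (fun x : ℝ => x ^ (b-1) * (1-x) ^ (l-1)) volume 0 1 := by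
  have h1 : IntervalIntegrable (fun x : ℝ => (1-x) ^ (l-1)) volume 0 1 := by
    have := (intervalIntegrable_rpow' (a := 0) (b := 1) (r := l - 1)
      (by linarith)).comp_sub_left 1
    simpa using this.symm
  rw [intervalIntegrable_iff_integrableOn_Ioc_of_le zero_le_one] at h1 ⊢
  refine h1.mono' ?_ ?_
  · exact (Measurable.aestronglyMeasurable (by fun_prop))
  · filter_upwards [ae_restrict_mem measurableSet_Ioc] with x hx
    have hx0 : 0 < x := hx.1
    have hx1 : x ≤ 1 := hx.2
    have h1x : 0 ≤ 1 - x := by linarith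
    rw [Real.norm_eq_abs, abs_of_nonneg (by positivity)]
    have : x ^ (b-1) ≤ 1 := Real.rpow_le_one hx0.le hx1 (by linarith)
    calc x ^ (b-1) * (1-x) ^ (l-1) ≤ 1 * (1-x) ^ (l-1) := by
          apply mul_le_mul_of_nonneg_right this (by positivity)
      _ = (1-x) ^ (l-1) := one_mul _

/-- For `α ≥ −1/2`, `λ > 0`, `b ≥ 1` and `0 < B < A`,
`∫₀¹ (1−s)^{α+b−1/2} (A−Bs)^{−(α+b+λ+1/2)} ds ≤ (Γ(b)Γ(λ)/Γ(b+λ)) A^{−(α+1/2)} B^{−b} (A−B)^{−λ}`. -/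
theorem stmt13 (α lam b A B : ℝ) (hα : -(1/2) ≤ α) (hlam : 0 < lam) (hb : 1 ≤ b)
    (hB : 0 < B) (hBA : B < A) :
    (∫ s in Set.Ioo (0:ℝ) 1, (1 - s) ^ (α + b - 1/2) * (A - B * s) ^ (-(α + b + lam + 1/2))) ≤
      Real.Gamma b * Real.Gamma lam / Real.Gamma (b + lam) *
        A ^ (-(α + 1/2)) * B ^ (-b) * (A - B) ^ (-lam) := by
  have hA : 0 < A := hB.trans hBA
  have hd : 0 < A - B := by linarith
  set c : ℝ := α + 1/2 with hc_def
  have hc : 0 ≤ c := by rw [hc_def]; linarith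
  set g : ℝ → ℝ := fun s => (1 - s) ^ (b-1) * (A - B * s) ^ (-(b + lam)) with hg_def
  -- continuity of g on [0,1]
  have hvpos : ∀ s ∈ Icc (0:ℝ) 1, 0 < A - B * s := by
    intro s hs
    nlinarith [hs.1, hs.2]
  have hgcont : ContinuousOn g (Icc (0:ℝ) 1) := by
    apply ContinuousOn.mul
    · exact (continuousOn_const.sub continuousOn_id).rpow_const
        (fun x _ => Or.inr (by linarith))
    · exact (continuousOn_const.sub (continuousOn_const.mul continuousOn_id)).rpow_const
        (fun x hx => Or.inl (ne_of_gt (hvpos x hx)))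
  -- Step 1: pointwise bound
  have step1 : (∫ s in Set.Ioo (0:ℝ) 1, (1 - s) ^ (α + b - 1/2) * (A - B * s) ^ (-(α + b + lam + 1/2)))
      ≤ ∫ s in Set.Ioo (0:ℝ) 1, A ^ (-c) * g s := by
    apply integral_mono_of_nonneg
    · filter_upwards [ae_restrict_mem measurableSet_Ioo] with s hs
      have hu : (0:ℝ) < 1 - s := by linarith [hs.2]
      have hv : (0:ℝ) < A - B * s := hvpos s (Ioo_subset_Icc_self hs)
      positivity
    · apply ((continuousOn_const.mul hgcont).integrableOn_Icc).mono_set Ioo_subset_Icc_self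
    · filter_upwards [ae_restrict_mem measurableSet_Ioo] with s hs
      have hu : (0:ℝ) < 1 - s := by linarith [hs.2]
      have hv : (0:ℝ) < A - B * s := hvpos s (Ioo_subset_Icc_self hs)
      have e1 : (1 - s) ^ (α + b - 1/2) = (1-s) ^ c * (1-s) ^ (b-1) := by
        rw [← Real.rpow_add hu, hc_def]; ring_nf
      have e2 : (A - B * s) ^ (-(α + b + lam + 1/2))
          = (A - B*s) ^ (-c) * (A - B*s) ^ (-(b + lam)) := by
        rw [← Real.rpow_add hv, hc_def]; ring_nf
      have e3 : (1-s) ^ c * (A - B*s) ^ (-c) ≤ A ^ (-c) := by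
        rw [Real.rpow_neg hv.le, ← div_eq_mul_inv, ← Real.div_rpow hu.le hv.le,
          Real.rpow_neg hA.le, ← Real.inv_rpow hA.le]
        apply Real.rpow_le_rpow (by positivity) _ hc
        rw [inv_eq_one_div, div_le_div_iff₀ hv hA]
        nlinarith [hs.1, hd.le]
      calc (1 - s) ^ (α + b - 1/2) * (A - B * s) ^ (-(α + b + lam + 1/2))
          = ((1-s) ^ c * (A - B*s) ^ (-c)) * g s := by rw [e1, e2, hg_def]; ring
        _ ≤ A ^ (-c) * g s := by
            apply mul_le_mul_of_nonneg_right e3 (by positivity)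
  -- Step 2: substitution in ∫ g
  set φ : ℝ → ℝ := fun t => (B - A * t) / (B * (1 - t)) with hφ_def
  have hBA1 : B / A < 1 := (div_lt_one hA).mpr hBA
  have hBA0 : 0 ≤ B / A := by positivity
  have hsubst : ∫ s in (0:ℝ)..1, g s
      = ∫ t in (0:ℝ)..(B/A), -((B - A)/(B * (1-t)^2) * g (φ t)) := by
    have hderiv : ∀ t ∈ uIcc (0:ℝ) (B/A),
        HasDerivAt φ ((B - A)/(B * (1-t)^2)) t := by
      intro t ht
      rw [uIcc_of_le hBA0] at ht
      have ht1 : (0:ℝ) < 1 - t := by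
        have := lt_of_le_of_lt ht.2 hBA1; linarith
      have hden : B * (1 - t) ≠ 0 := by positivity
      have h1 : HasDerivAt (fun t : ℝ => B - A * t) (-A) t := by
        simpa using ((hasDerivAt_id t).const_mul A).const_sub B
      have h2 : HasDerivAt (fun t : ℝ => B * (1 - t)) (-B) t := by
        simpa using ((hasDerivAt_id t).const_sub 1).const_mul B
      have := h1.div h2 hden
      refine this.congr_deriv ?_
      rw [div_eq_div_iff (by positivity) (by positivity)]
      ring
    have hderiv_cont : ContinuousOn (fun t : ℝ => (B - A)/(B * (1-t)^2)) (uIcc 0 (B/A)) := by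
      rw [uIcc_of_le hBA0]
      apply ContinuousOn.div continuousOn_const (by fun_prop)
      intro t ht
      have ht1 : (0:ℝ) < 1 - t := by
        have := lt_of_le_of_lt ht.2 hBA1; linarith
      positivity
    have himg : φ '' uIcc (0:ℝ) (B/A) ⊆ Icc 0 1 := by
      rintro _ ⟨t, ht, rfl⟩
      rw [uIcc_of_le hBA0] at ht
      have ht1 : (0:ℝ) < 1 - t := by
        have := lt_of_le_of_lt ht.2 hBA1; linarith
      have hnum : 0 ≤ B - A * t := by
        have h := (le_div_iff₀ hA).mp ht.2
        nlinarith
      have hden : 0 < B * (1 - t) := by positivity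
      constructor
      · exact div_nonneg hnum hden.le
      · rw [div_le_one hden]; nlinarith [ht.1, ht1]
    have := intervalIntegral.integral_comp_smul_deriv' hderiv hderiv_cont
      (hgcont.mono himg)
    simp only [Function.comp, smul_eq_mul] at this
    have hφ0 : φ 0 = 1 := by rw [hφ_def]; field_simp; ring
    have hφB : φ (B/A) = 0 := by
      rw [hφ_def]; simp only []
      rw [div_eq_zero_iff]
      left
      field_simp; ring
    rw [hφ0, hφB] at this
    rw [intervalIntegral.integral_neg ]
    rw [this, intervalIntegral.integral_symm]
  -- Step 3: identify the substituted integrand with the Beta integrand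
  have step3 : ∫ t in (0:ℝ)..(B/A), -((B - A)/(B * (1-t)^2) * g (φ t))
      = B ^ (-b) * (A-B) ^ (-lam) * ∫ t in (0:ℝ)..(B/A), t ^ (b-1) * (1-t) ^ (lam-1) := by
    rw [← intervalIntegral.integral_const_mul]
    rw [intervalIntegral.integral_of_le hBA0, intervalIntegral.integral_of_le hBA0,
      integral_Ioc_eq_integral_Ioo, integral_Ioc_eq_integral_Ioo]
    apply setIntegral_congr_fun measurableSet_Ioo
    intro t ht
    have ht0 : 0 < t := ht.1
    have ht1 : t < 1 := ht.2.trans hBA1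
    have h1t : (0:ℝ) < 1 - t := by linarith
    have hden : B * (1 - t) ≠ 0 := by positivity
    have h1 : 1 - φ t = (A - B) * t / (B * (1 - t)) := by
      rw [hφ_def]; field_simp; ring
    have h2 : A - B * φ t = (A - B) / (1 - t) := by
      rw [hφ_def]; field_simp; ring
    show -((B - A)/(B * (1-t)^2) * g (φ t)) = _
    rw [hg_def]
    simp only []
    rw [h1, h2]
    have hb1 : 0 < (A - B) * t / (B * (1 - t)) := by positivity
    have hb2 : 0 < (A - B) / (1 - t) := by positivity
    have lhsrw : -((B - A)/(B * (1-t)^2)) = (A - B)/(B * (1-t)^2) := by ring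
    rw [show -((B - A)/(B * (1-t)^2) * (((A - B) * t / (B * (1 - t))) ^ (b-1) *
        ((A - B) / (1 - t)) ^ (-(b+lam)))) = ((A - B)/(B * (1-t)^2)) *
        (((A - B) * t / (B * (1 - t))) ^ (b-1) * ((A - B) / (1 - t)) ^ (-(b+lam))) by ring]
    have exp1 : ((A - B) * t / (B * (1 - t))) ^ (b-1)
        = Real.exp ((Real.log (A-B) + Real.log t - (Real.log B + Real.log (1-t))) * (b-1)) := by
      rw [Real.rpow_def_of_pos hb1, Real.log_div (by positivity) hden,
        Real.log_mul (by positivity) (ne_of_gt ht0), Real.log_mul (ne_of_gt hB) (ne_of_gt h1t)]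
    have exp2 : ((A - B) / (1 - t)) ^ (-(b+lam))
        = Real.exp ((Real.log (A-B) - Real.log (1-t)) * (-(b+lam))) := by
      rw [Real.rpow_def_of_pos hb2, Real.log_div (ne_of_gt hd) (ne_of_gt h1t)]
    have exp3 : (A - B)/(B * (1-t)^2)
        = Real.exp (Real.log (A-B) - (Real.log B + 2 * Real.log (1-t))) := by
      rw [Real.exp_sub, Real.exp_add, Real.exp_log hd, Real.exp_log hB,
        show (2:ℝ) * Real.log (1-t) = Real.log ((1-t)^2) by rw [Real.log_pow]; push_cast; ring,
        Real.exp_log (by positivity)]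
    rw [exp1, exp2, exp3, Real.rpow_def_of_pos hB, Real.rpow_def_of_pos hd,
      Real.rpow_def_of_pos ht0, Real.rpow_def_of_pos h1t,
      ← Real.exp_add, ← Real.exp_add, ← Real.exp_add, ← Real.exp_add, ← Real.exp_add,
      Real.exp_eq_exp]
    ring
  -- Step 4: bound the incomplete Beta integral by the full one
  have step4 : ∫ t in (0:ℝ)..(B/A), t ^ (b-1) * (1-t) ^ (lam-1)
      ≤ Real.Gamma b * Real.Gamma lam / Real.Gamma (b + lam) := by
    rw [← realBeta (by linarith : (0:ℝ) < b) hlam]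
    apply intervalIntegral.integral_mono_interval le_rfl hBA0 hBA1.le
    · filter_upwards [ae_restrict_mem measurableSet_Ioc] with t ht
      exact mul_nonneg (Real.rpow_nonneg ht.1.le _)
        (Real.rpow_nonneg (by linarith [ht.2]) _)
    · exact betaIntegrand_intble hb hlam
  -- Assemble
  have hJ : ∫ s in Set.Ioo (0:ℝ) 1, A ^ (-c) * g s
      ≤ A ^ (-c) * (B ^ (-b) * (A-B) ^ (-lam) *
        (Real.Gamma b * Real.Gamma lam / Real.Gamma (b + lam))) := by
    rw [MeasureTheory.integral_const_mul]
    apply mul_le_mul_of_nonneg_left _ (by positivity)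
    have : ∫ s in Set.Ioo (0:ℝ) 1, g s = ∫ s in (0:ℝ)..1, g s := by
      rw [intervalIntegral.integral_of_le zero_le_one, integral_Ioc_eq_integral_Ioo]
    rw [this, hsubst, step3]
    apply mul_le_mul_of_nonneg_left step4 (by positivity)
  calc (∫ s in Set.Ioo (0:ℝ) 1, (1 - s) ^ (α + b - 1/2) * (A - B * s) ^ (-(α + b + lam + 1/2)))
      ≤ ∫ s in Set.Ioo (0:ℝ) 1, A ^ (-c) * g s := step1
    _ ≤ A ^ (-c) * (B ^ (-b) * (A-B) ^ (-lam) *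
        (Real.Gamma b * Real.Gamma lam / Real.Gamma (b + lam))) := hJ
    _ = Real.Gamma b * Real.Gamma lam / Real.Gamma (b + lam) *
        A ^ (-(α + 1/2)) * B ^ (-b) * (A - B) ^ (-lam) := by rw [hc_def]; ring
end

section
/- Let α ≥ −1/2, b ≥ 1 and 0 < B < A. Then ∫₀¹ (1−s)^{α+b−1/2} (A−Bs)^{−(α+b+1/2)} ds ≤ A^{−(α+1/2)} · B^{−b} · log(A/(A−B)). -/
open MeasureTheory

/-- For `α ≥ −1/2`, `b ≥ 1` and `0 < B < A`,
`∫₀¹ (1−s)^{α+b−1/2} (A−Bs)^{−(α+b+1/2)} ds ≤ A^{−(α+1/2)} B^{−b} log(A/(A−B))`. -/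
theorem stmt14 (α b A B : ℝ) (hα : -(1/2) ≤ α) (hb : 1 ≤ b) (hB : 0 < B) (hBA : B < A) :
    (∫ s in Set.Ioo (0:ℝ) 1, (1 - s) ^ (α + b - 1/2) * (A - B * s) ^ (-(α + b + 1/2))) ≤
      A ^ (-(α + 1/2)) * B ^ (-b) * Real.log (A / (A - B)) := by
  have hA : 0 < A := hB.trans hBA
  have hAB : 0 < A - B := sub_pos.mpr hBA
  have hvpos : ∀ s ∈ Set.Icc (0:ℝ) 1, 0 < A - B * s := by
    intro s hs
    nlinarith [hs.1, hs.2]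
  set g : ℝ → ℝ := fun s => A ^ (-(α + 1/2)) * B ^ (1 - b) * (A - B * s)⁻¹ with hg
  have hcont : ContinuousOn g (Set.Icc 0 1) := by
    apply ContinuousOn.mul continuousOn_const
    apply ContinuousOn.inv₀
    · exact continuousOn_const.sub (continuousOn_const.mul continuousOn_id)
    · intro s hs
      exact (hvpos s hs).ne'
  have hgint : IntegrableOn g (Set.Ioo 0 1) :=
    (hcont.integrableOn_Icc).mono_set Set.Ioo_subset_Icc_self
  -- pointwise bound
  have hbound : ∀ s ∈ Set.Ioo (0:ℝ) 1,
      (1 - s) ^ (α + b - 1/2) * (A - B * s) ^ (-(α + b + 1/2)) ≤ g s := by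
    intro s hs
    set u := 1 - s with hu
    set v := A - B * s with hv
    have hupos : 0 < u := by simp only [hu]; linarith [hs.2]
    have hvpos' : 0 < v := hvpos s ⟨hs.1.le, hs.2.le⟩
    have hp : (0:ℝ) ≤ α + 1/2 := by linarith
    have hq : (0:ℝ) ≤ b - 1 := by linarith
    have huvA : u / v ≤ 1 / A := by
      rw [div_le_div_iff₀ hvpos' hA]
      have : 0 ≤ s := hs.1.le
      nlinarith [hB.le]
    have huvB : u / v ≤ 1 / B := by
      rw [div_le_div_iff₀ hvpos' hB]
      have : 0 ≤ s := hs.1.le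
      nlinarith
    have key : u ^ (α + b - 1/2) * v ^ (-(α + b + 1/2)) =
        (u / v) ^ (α + 1/2) * ((u / v) ^ (b - 1) * v⁻¹) := by
      rw [Real.div_rpow hupos.le hvpos'.le, Real.div_rpow hupos.le hvpos'.le]
      rw [Real.rpow_neg hvpos'.le]
      rw [show α + b - 1/2 = (α + 1/2) + (b - 1) by ring,
        show α + b + 1/2 = (α + 1/2) + (b - 1) + 1 by ring,
        Real.rpow_add hupos, Real.rpow_add hvpos', Real.rpow_add hvpos', Real.rpow_one]
      field_simp
    rw [key, hg]
    have h1 : (u / v) ^ (α + 1/2) ≤ A ^ (-(α + 1/2)) := by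
      rw [Real.rpow_neg hA.le, ← Real.inv_rpow hA.le]
      exact Real.rpow_le_rpow (by positivity) (by rw [← one_div]; exact huvA) hp
    have h2 : (u / v) ^ (b - 1) ≤ B ^ (1 - b) := by
      rw [show (1:ℝ) - b = -(b-1) by ring, Real.rpow_neg hB.le, ← Real.inv_rpow hB.le]
      exact Real.rpow_le_rpow (by positivity) (by rw [← one_div]; exact huvB) hq
    have h2' : (u / v) ^ (b - 1) * v⁻¹ ≤ B ^ (1 - b) * v⁻¹ :=
      mul_le_mul_of_nonneg_right h2 (by positivity)
    calc (u / v) ^ (α + 1/2) * ((u / v) ^ (b - 1) * v⁻¹)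
        ≤ A ^ (-(α + 1/2)) * (B ^ (1 - b) * v⁻¹) :=
          mul_le_mul h1 h2' (by positivity) (by positivity)
      _ = A ^ (-(α + 1/2)) * B ^ (1 - b) * v⁻¹ := by ring
  -- compare integrals
  have hle : (∫ s in Set.Ioo (0:ℝ) 1, (1 - s) ^ (α + b - 1/2) * (A - B * s) ^ (-(α + b + 1/2)))
      ≤ ∫ s in Set.Ioo (0:ℝ) 1, g s := by
    apply integral_mono_of_nonneg
    · refine (ae_restrict_iff' measurableSet_Ioo).2 (ae_of_all _ fun s hs => ?_)
      have h1 : (0:ℝ) < 1 - s := by linarith [hs.2]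
      have h2 : (0:ℝ) < A - B * s := hvpos s ⟨hs.1.le, hs.2.le⟩
      positivity
    · exact hgint
    · exact (ae_restrict_iff' measurableSet_Ioo).2 (ae_of_all _ hbound)
  -- compute ∫ g
  have hint1 : (∫ s in Set.Ioo (0:ℝ) 1, (A - B * s)⁻¹) = B⁻¹ * Real.log (A / (A - B)) := by
    rw [← integral_Ioc_eq_integral_Ioo, ← intervalIntegral.integral_of_le (by norm_num : (0:ℝ) ≤ 1)]
    have hderiv : ∀ s ∈ Set.uIcc (0:ℝ) 1,
        HasDerivAt (fun s => -B⁻¹ * Real.log (A - B * s)) ((A - B * s)⁻¹) s := by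
      intro s hs
      rw [Set.uIcc_of_le (by norm_num : (0:ℝ) ≤ 1)] at hs
      have hv : 0 < A - B * s := hvpos s hs
      have h1 : HasDerivAt (fun s : ℝ => A - B * s) (-B) s := by
        simpa using ((hasDerivAt_id s).const_mul B).const_sub A
      have h2 := (h1.log hv.ne').const_mul (-B⁻¹)
      convert h2 using 1
      · rfl
      · rfl
      field_simp
    have hintg : IntervalIntegrable (fun s => (A - B * s)⁻¹) volume 0 1 := by
      apply ContinuousOn.intervalIntegrable
      rw [Set.uIcc_of_le (by norm_num : (0:ℝ) ≤ 1)]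
      exact ContinuousOn.inv₀ (continuousOn_const.sub (continuousOn_const.mul continuousOn_id))
        fun s hs => (hvpos s hs).ne'
    rw [intervalIntegral.integral_eq_sub_of_hasDerivAt hderiv hintg]
    simp only [mul_one, mul_zero, sub_zero]
    rw [Real.log_div hA.ne' hAB.ne']
    ring
  have hgval : (∫ s in Set.Ioo (0:ℝ) 1, g s)
      = A ^ (-(α + 1/2)) * B ^ (-b) * Real.log (A / (A - B)) := by
    simp only [hg]
    rw [integral_const_mul, hint1]
    have hBB : B ^ ((1:ℝ) - b) * B⁻¹ = B ^ (-b) := by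
      rw [← Real.rpow_neg_one B, ← Real.rpow_add hB]
      norm_num
      rw [show (1:ℝ) - b + -1 = -b by ring]
    calc A ^ (-(α + 1/2)) * B ^ (1 - b) * (B⁻¹ * Real.log (A / (A - B)))
        = A ^ (-(α + 1/2)) * (B ^ ((1:ℝ) - b) * B⁻¹) * Real.log (A / (A - B)) := by ring
      _ = A ^ (-(α + 1/2)) * B ^ (-b) * Real.log (A / (A - B)) := by rw [hBB]
  rw [← hgval]
  exact hle
end

section
/- Let λ < 0. There exists a constant C, depending only on λ, such that for every α ≥ −1/2, every b ≥ 1 and all 0 < B < A one has ∫₀¹ (1−s)^{α+b−1/2} (A−Bs)^{−(α+b+λ+1/2)} ds ≤ C · A^{−(α+λ+1/2)} · B^{−b}. -/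
open MeasureTheory Real Set

theorem aux_int (r : ℝ) (hr : -1 < r) : IntegrableOn (fun s : ℝ => (1 - s) ^ r) (Ioo (0:ℝ) 1) := by
  have h := ((intervalIntegral.intervalIntegrable_rpow' (a := 0) (b := 1) hr).comp_sub_left 1).symm
  norm_num at h
  rw [intervalIntegrable_iff_integrableOn_Ioc_of_le (by norm_num : (0:ℝ) ≤ 1)] at h
  exact h.mono_set Ioo_subset_Ioc_self

theorem aux_val (r : ℝ) (hr : -1 < r) :
    (∫ s in Ioo (0:ℝ) 1, (1 - s) ^ r) = 1 / (r + 1) := by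
  rw [← integral_Ioc_eq_integral_Ioo, ← intervalIntegral.integral_of_le (by norm_num : (0:ℝ) ≤ 1),
    intervalIntegral.integral_comp_sub_left (fun x : ℝ => x ^ r) 1,
    integral_rpow (Or.inl hr)]
  norm_num [Real.zero_rpow (show r+1 ≠ 0 by linarith)]

/-- For fixed `λ < 0` there is a constant `C = C(λ)` such that for all
`α ≥ −1/2`, `b ≥ 1` and `0 < B < A`,
`∫₀¹ (1−s)^{α+b−1/2} (A−Bs)^{−(α+b+λ+1/2)} ds ≤ C A^{−(α+λ+1/2)} B^{−b}`. -/
theorem stmt15 (lam : ℝ) (hlam : lam < 0) :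
    ∃ C : ℝ, 0 < C ∧ ∀ α b A B : ℝ, -(1/2) ≤ α → 1 ≤ b → 0 < B → B < A →
      (∫ s in Set.Ioo (0:ℝ) 1, (1 - s) ^ (α + b - 1/2) * (A - B * s) ^ (-(α + b + lam + 1/2))) ≤
        C * A ^ (-(α + lam + 1/2)) * B ^ (-b) := by
  have hnl : 0 < -lam := by linarith
  refine ⟨1 / (-lam) + 1, by positivity, fun α b A B hα hb hB hBA => ?_⟩
  have hA : 0 < A := hB.trans hBA
  set q : ℝ := α + b + lam + 1/2 with hq
  set p : ℝ := α + b - 1/2 with hp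
  have hp0 : 0 ≤ p := by simp only [hp]; linarith
  have hr : (-1 : ℝ) < -1 - lam := by linarith
  -- integrability of the dominating function
  have hg : IntegrableOn (fun s : ℝ => A ^ (-q) * ((1 - s) ^ (-1-lam) + 1)) (Ioo (0:ℝ) 1) := by
    exact (((aux_int _ hr).add (integrableOn_const measure_Ioo_lt_top.ne)).const_mul _)
  -- pointwise bound
  have hbound : ∀ s ∈ Ioo (0:ℝ) 1,
      (1 - s) ^ p * (A - B * s) ^ (-q) ≤ A ^ (-q) * ((1 - s) ^ (-1-lam) + 1) := by
    intro s hs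
    obtain ⟨hs0, hs1⟩ := hs
    have hu0 : 0 < 1 - s := by linarith
    have hABs : 0 < A - B * s := by nlinarith
    have h1 : A * (1 - s) ≤ A - B * s := by nlinarith
    have h2 : A - B * s ≤ A := by nlinarith
    rcases le_or_gt 0 q with hq0 | hq0
    · have : (A - B * s) ^ (-q) ≤ (A * (1 - s)) ^ (-q) :=
        Real.rpow_le_rpow_of_nonpos (by positivity) h1 (by linarith)
      calc (1 - s) ^ p * (A - B * s) ^ (-q)
          ≤ (1 - s) ^ p * (A * (1 - s)) ^ (-q) := by
            exact mul_le_mul_of_nonneg_left this (Real.rpow_nonneg hu0.le _)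
        _ = A ^ (-q) * ((1 - s) ^ p * (1 - s) ^ (-q)) := by
            rw [Real.mul_rpow hA.le hu0.le]; ring
        _ = A ^ (-q) * (1 - s) ^ (p + -q) := by rw [← Real.rpow_add hu0]
        _ = A ^ (-q) * (1 - s) ^ (-1-lam) := by
            congr 1
            simp only [hp, hq]; ring
        _ ≤ A ^ (-q) * ((1 - s) ^ (-1-lam) + 1) := by
            have := Real.rpow_nonneg (x := A) hA.le (-q)
            nlinarith [Real.rpow_nonneg (x := A) hA.le (-q)]
    · have h3 : (A - B * s) ^ (-q) ≤ A ^ (-q) :=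
        Real.rpow_le_rpow hABs.le h2 (by linarith)
      have h4 : (1 - s) ^ p ≤ 1 := Real.rpow_le_one hu0.le (by linarith) hp0
      calc (1 - s) ^ p * (A - B * s) ^ (-q)
          ≤ 1 * A ^ (-q) := mul_le_mul h4 h3 (Real.rpow_nonneg hABs.le _)
            (by norm_num)
        _ ≤ A ^ (-q) * ((1 - s) ^ (-1-lam) + 1) := by
            nlinarith [Real.rpow_nonneg (x := A) hA.le (-q),
              Real.rpow_nonneg hu0.le (-1-lam)]
  -- compare integrals
  have key : (∫ s in Ioo (0:ℝ) 1, (1 - s) ^ p * (A - B * s) ^ (-q)) ≤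
      ∫ s in Ioo (0:ℝ) 1, A ^ (-q) * ((1 - s) ^ (-1-lam) + 1) := by
    apply integral_mono_of_nonneg
    · filter_upwards [ae_restrict_mem measurableSet_Ioo] with s hs
      have hu0 : (0:ℝ) < 1 - s := by linarith [hs.2]
      have hABs : 0 < A - B * s := by nlinarith [hs.1, hs.2]
      positivity
    · exact hg
    · filter_upwards [ae_restrict_mem measurableSet_Ioo] with s hs using hbound s hs
  -- value of the dominating integral
  have hval : (∫ s in Ioo (0:ℝ) 1, A ^ (-q) * ((1 - s) ^ (-1-lam) + 1))
      = A ^ (-q) * (1 / (-lam) + 1) := by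
    rw [integral_const_mul, integral_add (aux_int _ hr)
      (integrableOn_const measure_Ioo_lt_top.ne), aux_val _ hr,
      setIntegral_const, Real.volume_real_Ioo]
    norm_num
    left; ring
  rw [hval] at key
  refine key.trans ?_
  -- final algebraic inequality
  have hAb : A ^ (-(α + lam + 1/2)) = A ^ (-q) * A ^ b := by
    rw [← Real.rpow_add hA, hq]; congr 1; ring
  have hBb : (1:ℝ) ≤ A ^ b * B ^ (-b) := by
    have h1 : B ^ b ≤ A ^ b := Real.rpow_le_rpow hB.le hBA.le (by linarith)
    have h2 : B ^ b * B ^ (-b) = 1 := by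
      rw [← Real.rpow_add hB]; simp
    have h3 : 0 < B ^ (-b) := Real.rpow_pos_of_pos hB _
    nlinarith
  have hC : (0:ℝ) < 1 / (-lam) + 1 := by positivity
  have hAq : 0 < A ^ (-q) := Real.rpow_pos_of_pos hA _
  calc A ^ (-q) * (1 / (-lam) + 1)
      = (A ^ (-q) * 1) * (1 / (-lam) + 1) := by ring
    _ ≤ (A ^ (-q) * (A ^ b * B ^ (-b))) * (1 / (-lam) + 1) :=
        mul_le_mul_of_nonneg_right (mul_le_mul_of_nonneg_left hBb hAq.le) hC.le
    _ = (1 / (-lam) + 1) * A ^ (-(α + lam + 1/2)) * B ^ (-b) := by rw [hAb]; ring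
end
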